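/- Let T' be a finite tree containing a vertex v that has two distinct neighbors a and b each of degree 1 in T', and let T be the tree obtained from T' by adding three new vertices u₁, u₂, u₃ with edges u₁u₂, u₂u₃, and vu₁. Then γ₂(T) = γ₂(T') + 2 and α₂(T) = α₂(T') + 2; in particular α₂(T) − γ₂(T) = α₂(T') − γ₂(T'). -/

import Mathlib

open SimpleGraph

/-- `S` is a `k`-dominating set of the subgraph of `G` induced by `U`:
`S ⊆ U` and every vertex of `U` not in `S` has at least `k` neighbors in `S`. -/
def IsKDomOn {V : Type*} (G : SimpleGraph V) (k : ℕ) (U S : Set V) : Prop :=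
  S ⊆ U ∧ ∀ v ∈ U, v ∉ S → k ≤ (G.neighborSet v ∩ S).ncard

/-- `S` is a `k`-independent set of the subgraph of `G` induced by `U`:
`S ⊆ U` and every vertex of `S` has at most `k - 1` neighbors in `S`. -/
def IsKIndOn {V : Type*} (G : SimpleGraph V) (k : ℕ) (U S : Set V) : Prop :=
  S ⊆ U ∧ ∀ v ∈ S, (G.neighborSet v ∩ S).ncard ≤ k - 1

/-- The `k`-domination number of the subgraph of `G` induced by `U`. -/
noncomputable def gammaK {V : Type*} (G : SimpleGraph V) (k : ℕ) (U : Set V) : ℕ :=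
  sInf {n | ∃ S, IsKDomOn G k U S ∧ S.ncard = n}

/-- The `k`-independence number of the subgraph of `G` induced by `U`. -/
noncomputable def alphaK {V : Type*} (G : SimpleGraph V) (k : ℕ) (U : Set V) : ℕ :=
  sSup {n | ∃ S, IsKIndOn G k U S ∧ S.ncard = n}

section aux
set_option linter.unusedSectionVars false
variable {V : Type*} [Fintype V] (G : SimpleGraph V) (k : ℕ) (U : Set V)

lemma gammaK_exists : ∃ S, IsKDomOn G k U S ∧ S.ncard = gammaK G k U := by
  have hne : {n | ∃ S, IsKDomOn G k U S ∧ S.ncard = n}.Nonempty :=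
    ⟨U.ncard, U, ⟨subset_rfl, fun v hv hv' => absurd hv hv'⟩, rfl⟩
  exact Nat.sInf_mem hne

lemma gammaK_le {S} (h : IsKDomOn G k U S) : gammaK G k U ≤ S.ncard :=
  Nat.sInf_le ⟨S, h, rfl⟩

lemma alphaK_bdd : BddAbove {n | ∃ S, IsKIndOn G k U S ∧ S.ncard = n} := by
  refine ⟨Nat.card V, ?_⟩
  rintro n ⟨S, _, rfl⟩
  calc S.ncard ≤ (Set.univ : Set V).ncard :=
        Set.ncard_le_ncard (Set.subset_univ S) Set.finite_univ
    _ = Nat.card V := Set.ncard_univ V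

lemma alphaK_exists : ∃ S, IsKIndOn G k U S ∧ S.ncard = alphaK G k U := by
  have hne : {n | ∃ S, IsKIndOn G k U S ∧ S.ncard = n}.Nonempty :=
    ⟨0, ∅, ⟨Set.empty_subset U, fun v hv => absurd hv (Set.notMem_empty v)⟩, Set.ncard_empty _⟩
  exact Nat.sSup_mem hne (alphaK_bdd G k U)

lemma le_alphaK {S} (h : IsKIndOn G k U S) : S.ncard ≤ alphaK G k U :=
  le_csSup (alphaK_bdd G k U) ⟨S, h, rfl⟩
end aux

lemma split_ncard {V : Type*} [Fintype V] (S : Set (V ⊕ Fin 3)) :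
    S.ncard = (Sum.inl ⁻¹' S).ncard + (Sum.inr ⁻¹' S).ncard := by
  have hS : S = Sum.inl '' (Sum.inl ⁻¹' S) ∪ Sum.inr '' (Sum.inr ⁻¹' S) := by
    ext w; cases w <;> simp
  have hd : Disjoint (Sum.inl '' (Sum.inl ⁻¹' S)) (Sum.inr '' (Sum.inr ⁻¹' S)) :=
    Set.disjoint_left.mpr (by rintro w ⟨x, _, rfl⟩ ⟨y, _, h⟩; exact absurd h (by simp))
  conv_lhs => rw [hS]
  rw [Set.ncard_union_eq hd (Set.toFinite _) (Set.toFinite _),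
    Set.ncard_image_of_injective _ Sum.inl_injective,
    Set.ncard_image_of_injective _ Sum.inr_injective]

theorem stmt11 {V : Type*} [Fintype V] (T' : SimpleGraph V) (hT' : T'.IsTree)
    (v a b : V) (hab : a ≠ b) (hva : T'.Adj v a) (hvb : T'.Adj v b)
    (hda : (T'.neighborSet a).ncard = 1) (hdb : (T'.neighborSet b).ncard = 1)
    (T : SimpleGraph (V ⊕ Fin 3))
    (hadj : ∀ a b, T.Adj a b ↔
      ((∃ x y, T'.Adj x y ∧ a = Sum.inl x ∧ b = Sum.inl y) ∨
       (a = (Sum.inr 0 : V ⊕ Fin 3) ∧ b = Sum.inr 1) ∨ (a = Sum.inr 1 ∧ b = (Sum.inr 0 : V ⊕ Fin 3)) ∨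
       (a = (Sum.inr 1 : V ⊕ Fin 3) ∧ b = Sum.inr 2) ∨ (a = Sum.inr 2 ∧ b = (Sum.inr 1 : V ⊕ Fin 3)) ∨
       (a = Sum.inl v ∧ b = (Sum.inr 0 : V ⊕ Fin 3)) ∨ (a = (Sum.inr 0 : V ⊕ Fin 3) ∧ b = Sum.inl v))) :
    gammaK T 2 Set.univ = gammaK T' 2 Set.univ + 2 ∧
    alphaK T 2 Set.univ = alphaK T' 2 Set.univ + 2 ∧
    (alphaK T 2 Set.univ : ℤ) - (gammaK T 2 Set.univ : ℤ) =
      (alphaK T' 2 Set.univ : ℤ) - (gammaK T' 2 Set.univ : ℤ) := by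
  classical
  -- membership in neighbor sets
  have mem_nbr_inl : ∀ (x : V) (w : V ⊕ Fin 3), w ∈ T.neighborSet (Sum.inl x) ↔
      (∃ y ∈ T'.neighborSet x, w = Sum.inl y) ∨ (x = v ∧ w = Sum.inr 0) := by
    intro x w
    rw [mem_neighborSet, hadj]
    constructor
    · rintro (⟨x', y, h, hx, rfl⟩ | ⟨h, _⟩ | ⟨h, _⟩ | ⟨h, _⟩ | ⟨h, _⟩ | ⟨h1, rfl⟩ | ⟨h, _⟩)
      · obtain rfl := Sum.inl_injective hx
        exact Or.inl ⟨y, h, rfl⟩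
      · exact absurd h (by simp)
      · exact absurd h (by simp)
      · exact absurd h (by simp)
      · exact absurd h (by simp)
      · exact Or.inr ⟨Sum.inl_injective h1, rfl⟩
      · exact absurd h (by simp)
    · rintro (⟨y, h, rfl⟩ | ⟨rfl, rfl⟩)
      · exact Or.inl ⟨x, y, h, rfl, rfl⟩
      · exact Or.inr (Or.inr (Or.inr (Or.inr (Or.inr (Or.inl ⟨rfl, rfl⟩)))))
  have ne02 : (Sum.inr 0 : V ⊕ Fin 3) ≠ Sum.inr 2 := by
    simp only [ne_eq, Sum.inr.injEq]; decide
  have ne12 : (Sum.inr 1 : V ⊕ Fin 3) ≠ Sum.inr 2 := by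
    simp only [ne_eq, Sum.inr.injEq]; decide
  have nbr0 : T.neighborSet (Sum.inr 0) = {Sum.inl v, Sum.inr 1} := by
    ext w
    rw [mem_neighborSet, hadj]
    constructor
    · rintro (⟨x, y, h, hx, rfl⟩ | ⟨_, rfl⟩ | ⟨h, _⟩ | ⟨h, _⟩ | ⟨h, _⟩ | ⟨h, _⟩ | ⟨_, rfl⟩) <;>
        simp_all
    · rintro (rfl | rfl)
      · exact Or.inr (Or.inr (Or.inr (Or.inr (Or.inr (Or.inr ⟨rfl, rfl⟩)))))
      · exact Or.inr (Or.inl ⟨rfl, rfl⟩)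
  have nbr1 : T.neighborSet (Sum.inr 1) = {Sum.inr 0, Sum.inr 2} := by
    ext w
    rw [mem_neighborSet, hadj]
    constructor
    · rintro (⟨x, y, h, hx, rfl⟩ | ⟨h, _⟩ | ⟨_, rfl⟩ | ⟨_, rfl⟩ | ⟨h, _⟩ | ⟨h, _⟩ | ⟨h, _⟩) <;>
        simp_all
    · rintro (rfl | rfl)
      · exact Or.inr (Or.inr (Or.inl ⟨rfl, rfl⟩))
      · exact Or.inr (Or.inr (Or.inr (Or.inl ⟨rfl, rfl⟩)))
  have nbr2 : T.neighborSet (Sum.inr 2) = {Sum.inr 1} := by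
    ext w
    rw [mem_neighborSet, hadj]
    constructor
    · rintro (⟨x, y, h, hx, rfl⟩ | ⟨h, _⟩ | ⟨h, _⟩ | ⟨h, _⟩ | ⟨_, rfl⟩ | ⟨h, _⟩ | ⟨h, _⟩) <;>
        simp_all
    · rintro rfl
      exact Or.inr (Or.inr (Or.inr (Or.inr (Or.inl ⟨rfl, rfl⟩))))
  -- neighbor set of a non-v left vertex
  have nbr_inl_ne : ∀ x : V, x ≠ v → T.neighborSet (Sum.inl x) = Sum.inl '' T'.neighborSet x := by
    intro x hx
    ext w
    rw [mem_nbr_inl]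
    constructor
    · rintro (⟨y, hy, rfl⟩ | ⟨rfl, _⟩)
      · exact ⟨y, hy, rfl⟩
      · exact absurd rfl hx
    · rintro ⟨y, hy, rfl⟩
      exact Or.inl ⟨y, hy, rfl⟩
  -- key inclusion
  have incl : ∀ (x : V) (S : Set (V ⊕ Fin 3)),
      Sum.inl '' (T'.neighborSet x ∩ Sum.inl ⁻¹' S) ⊆ T.neighborSet (Sum.inl x) ∩ S := by
    rintro x S w ⟨y, ⟨hy, hyS⟩, rfl⟩
    exact ⟨(mem_nbr_inl x _).2 (Or.inl ⟨y, hy, rfl⟩), hyS⟩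
  have card_le : ∀ (x : V) (S : Set (V ⊕ Fin 3)),
      (T'.neighborSet x ∩ Sum.inl ⁻¹' S).ncard ≤ (T.neighborSet (Sum.inl x) ∩ S).ncard := by
    intro x S
    rw [← Set.ncard_image_of_injective _ Sum.inl_injective]
    exact Set.ncard_le_ncard (incl x S) (Set.toFinite _)
  have hav : a ≠ v := hva.ne'
  have hbv : b ≠ v := hvb.ne'
  -- ================= gammaK =================
  obtain ⟨S', hS', hcS'⟩ := gammaK_exists T' 2 Set.univ
  obtain ⟨S, hS, hcS⟩ := gammaK_exists T 2 Set.univ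
  have hgle : gammaK T 2 Set.univ ≤ gammaK T' 2 Set.univ + 2 := by
    set D : Set (V ⊕ Fin 3) := Sum.inl '' S' ∪ {Sum.inr 0, Sum.inr 2} with hD
    have hpre : Sum.inl ⁻¹' D = S' := by
      ext y; simp [hD, Sum.inl_injective.eq_iff]
    have hdom : IsKDomOn T 2 Set.univ D := by
      refine ⟨Set.subset_univ _, ?_⟩
      rintro (w | i) _ hw
      · have hwS' : w ∉ S' := fun h => hw (Or.inl ⟨w, h, rfl⟩)
        have h2 := hS'.2 w (Set.mem_univ w) hwS'
        calc 2 ≤ (T'.neighborSet w ∩ S').ncard := h2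
          _ = (T'.neighborSet w ∩ Sum.inl ⁻¹' D).ncard := by rw [hpre]
          _ ≤ _ := card_le w D
      · fin_cases i
        · exact absurd (Or.inr (Or.inl rfl)) hw
        · have : {Sum.inr 0, Sum.inr 2} ⊆ T.neighborSet (Sum.inr 1) ∩ D := by
            rintro z (rfl | rfl)
            · exact ⟨by rw [nbr1]; exact Or.inl rfl, Or.inr (Or.inl rfl)⟩
            · exact ⟨by rw [nbr1]; exact Or.inr rfl, Or.inr (Or.inr rfl)⟩
          calc 2 = ({Sum.inr 0, Sum.inr 2} : Set (V ⊕ Fin 3)).ncard := (Set.ncard_pair ne02).symm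
            _ ≤ _ := Set.ncard_le_ncard this (Set.toFinite _)
        · exact absurd (Or.inr (Or.inr rfl)) hw
    have hcard : D.ncard = S'.ncard + 2 := by
      have hd : Disjoint (Sum.inl '' S') ({Sum.inr 0, Sum.inr 2} : Set (V ⊕ Fin 3)) := by
        rw [Set.disjoint_left]
        rintro z ⟨y, _, rfl⟩ (h | h) <;> exact absurd h (by simp)
      rw [hD, Set.ncard_union_eq hd (Set.toFinite _) (Set.toFinite _),
        Set.ncard_image_of_injective _ Sum.inl_injective, Set.ncard_pair ne02]
    calc gammaK T 2 Set.univ ≤ D.ncard := gammaK_le T 2 Set.univ hdom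
      _ = S'.ncard + 2 := hcard
      _ = gammaK T' 2 Set.univ + 2 := by rw [hcS']
  have hgge : gammaK T' 2 Set.univ + 2 ≤ gammaK T 2 Set.univ := by
    -- leaves of T must be in S
    have leafV : ∀ x : V, x ≠ v → (T'.neighborSet x).ncard = 1 → Sum.inl x ∈ S := by
      intro x hxv hx1
      by_contra hxS
      have h2 := hS.2 (Sum.inl x) (Set.mem_univ _) hxS
      have : (T.neighborSet (Sum.inl x) ∩ S).ncard ≤ 1 := by
        calc (T.neighborSet (Sum.inl x) ∩ S).ncard ≤ (T.neighborSet (Sum.inl x)).ncard :=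
            Set.ncard_le_ncard Set.inter_subset_left (Set.toFinite _)
          _ = (T'.neighborSet x).ncard := by
              rw [nbr_inl_ne x hxv, Set.ncard_image_of_injective _ Sum.inl_injective]
          _ = 1 := hx1
      omega
    have haS : Sum.inl a ∈ S := leafV a hav hda
    have hbS : Sum.inl b ∈ S := leafV b hbv hdb
    have h2S : Sum.inr 2 ∈ S := by
      by_contra hxS
      have h2 := hS.2 (Sum.inr 2) (Set.mem_univ _) hxS
      have : (T.neighborSet (Sum.inr 2) ∩ S).ncard ≤ 1 := by
        calc (T.neighborSet (Sum.inr 2) ∩ S).ncard ≤ (T.neighborSet (Sum.inr 2)).ncard :=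
            Set.ncard_le_ncard Set.inter_subset_left (Set.toFinite _)
          _ = 1 := by rw [nbr2]; exact Set.ncard_singleton _
      omega
    -- at least two right vertices in S
    have hr2 : 2 ≤ (Sum.inr ⁻¹' S).ncard := by
      by_cases h01 : Sum.inr 0 ∈ S ∨ Sum.inr 1 ∈ S
      · obtain h | h := h01
        · have hsub : ({0, 2} : Set (Fin 3)) ⊆ Sum.inr ⁻¹' S := by
            rintro z (rfl | rfl) <;> assumption
          calc 2 = ({0, 2} : Set (Fin 3)).ncard := (Set.ncard_pair (by decide)).symm
            _ ≤ _ := Set.ncard_le_ncard hsub (Set.toFinite _)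
        · have hsub : ({1, 2} : Set (Fin 3)) ⊆ Sum.inr ⁻¹' S := by
            rintro z (rfl | rfl) <;> assumption
          calc 2 = ({1, 2} : Set (Fin 3)).ncard := (Set.ncard_pair (by decide)).symm
            _ ≤ _ := Set.ncard_le_ncard hsub (Set.toFinite _)
      · push_neg at h01
        exfalso
        have h2 := hS.2 (Sum.inr 1) (Set.mem_univ _) h01.2
        have hsub : T.neighborSet (Sum.inr 1) ∩ S ⊆ {Sum.inr 2} := by
          rw [nbr1]
          rintro z ⟨(rfl | rfl), hz⟩
          · exact absurd hz h01.1
          · rfl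
        have : (T.neighborSet (Sum.inr 1) ∩ S).ncard ≤ 1 := by
          calc (T.neighborSet (Sum.inr 1) ∩ S).ncard ≤ ({Sum.inr 2} : Set (V ⊕ Fin 3)).ncard :=
              Set.ncard_le_ncard hsub (Set.toFinite _)
            _ = 1 := Set.ncard_singleton _
        omega
    -- left part is a 2-dominating set of T'
    have hdom' : IsKDomOn T' 2 Set.univ (Sum.inl ⁻¹' S) := by
      refine ⟨Set.subset_univ _, ?_⟩
      intro w _ hw
      by_cases hwv : w = v
      · rw [hwv] at hw ⊢
        have hsub : ({a, b} : Set V) ⊆ T'.neighborSet v ∩ Sum.inl ⁻¹' S := by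
          rintro z (rfl | rfl)
          · exact ⟨hva, haS⟩
          · exact ⟨hvb, hbS⟩
        calc 2 = ({a, b} : Set V).ncard := (Set.ncard_pair hab).symm
          _ ≤ _ := Set.ncard_le_ncard hsub (Set.toFinite _)
      · have h2 := hS.2 (Sum.inl w) (Set.mem_univ _) hw
        have hsub : T.neighborSet (Sum.inl w) ∩ S ⊆ Sum.inl '' (T'.neighborSet w ∩ Sum.inl ⁻¹' S) := by
          rintro z ⟨hz, hzS⟩
          rw [mem_nbr_inl] at hz
          obtain ⟨y, hy, rfl⟩ | ⟨rfl, _⟩ := hz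
          · exact ⟨y, ⟨hy, hzS⟩, rfl⟩
          · exact absurd rfl hwv
        calc 2 ≤ (T.neighborSet (Sum.inl w) ∩ S).ncard := h2
          _ ≤ (Sum.inl '' (T'.neighborSet w ∩ Sum.inl ⁻¹' S)).ncard :=
            Set.ncard_le_ncard hsub (Set.toFinite _)
          _ = (T'.neighborSet w ∩ Sum.inl ⁻¹' S).ncard :=
            Set.ncard_image_of_injective _ Sum.inl_injective
    calc gammaK T' 2 Set.univ + 2 ≤ (Sum.inl ⁻¹' S).ncard + 2 := by
          have := gammaK_le T' 2 Set.univ hdom'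
          omega
      _ ≤ (Sum.inl ⁻¹' S).ncard + (Sum.inr ⁻¹' S).ncard := by omega
      _ = S.ncard := (split_ncard S).symm
      _ = gammaK T 2 Set.univ := hcS
  have hgamma : gammaK T 2 Set.univ = gammaK T' 2 Set.univ + 2 := le_antisymm hgle hgge
  -- ================= alphaK =================
  obtain ⟨I', hI', hcI'⟩ := alphaK_exists T' 2 Set.univ
  obtain ⟨I, hI, hcI⟩ := alphaK_exists T 2 Set.univ
  have hage : alphaK T' 2 Set.univ + 2 ≤ alphaK T 2 Set.univ := by
    set J : Set (V ⊕ Fin 3) := Sum.inl '' I' ∪ {Sum.inr 1, Sum.inr 2} with hJ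
    have hpre : Sum.inl ⁻¹' J = I' := by
      ext y; simp [hJ, Sum.inl_injective.eq_iff]
    have h0J : (Sum.inr 0 : V ⊕ Fin 3) ∉ J := by
      rintro (⟨y, _, h⟩ | h | h)
      · exact absurd h (by simp)
      · exact absurd (Sum.inr_injective h) (by decide)
      · exact absurd (Sum.inr_injective h) (by decide)
    have hind : IsKIndOn T 2 Set.univ J := by
      refine ⟨Set.subset_univ _, ?_⟩
      rintro (w | i) hw
      · have hwI' : w ∈ I' := by
          obtain ⟨y, hy, h⟩ | h | h := hw
          · rwa [← Sum.inl_injective h]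
          · exact absurd h (by simp)
          · exact absurd h (by simp)
        have hsub : T.neighborSet (Sum.inl w) ∩ J ⊆ Sum.inl '' (T'.neighborSet w ∩ I') := by
          rintro z ⟨hz, hzJ⟩
          rw [mem_nbr_inl] at hz
          obtain ⟨y, hy, rfl⟩ | ⟨_, rfl⟩ := hz
          · refine ⟨y, ⟨hy, ?_⟩, rfl⟩
            have : y ∈ Sum.inl ⁻¹' J := hzJ
            rwa [hpre] at this
          · exact absurd hzJ h0J
        calc (T.neighborSet (Sum.inl w) ∩ J).ncard
            ≤ (Sum.inl '' (T'.neighborSet w ∩ I')).ncard :=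
              Set.ncard_le_ncard hsub (Set.toFinite _)
          _ = (T'.neighborSet w ∩ I').ncard := Set.ncard_image_of_injective _ Sum.inl_injective
          _ ≤ 2 - 1 := hI'.2 w hwI'
      · fin_cases i
        · exact absurd hw h0J
        · have hsub : T.neighborSet (Sum.inr 1) ∩ J ⊆ {Sum.inr 2} := by
            rw [nbr1]
            rintro z ⟨(rfl | rfl), hzJ⟩
            · exact absurd hzJ h0J
            · rfl
          calc (T.neighborSet (Sum.inr 1) ∩ J).ncard ≤ ({Sum.inr 2} : Set (V ⊕ Fin 3)).ncard :=
              Set.ncard_le_ncard hsub (Set.toFinite _)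
            _ = 2 - 1 := Set.ncard_singleton _
        · have hsub : T.neighborSet (Sum.inr 2) ∩ J ⊆ {Sum.inr 1} := by
            rw [nbr2]; exact Set.inter_subset_left
          calc (T.neighborSet (Sum.inr 2) ∩ J).ncard ≤ ({Sum.inr 1} : Set (V ⊕ Fin 3)).ncard :=
              Set.ncard_le_ncard hsub (Set.toFinite _)
            _ = 2 - 1 := Set.ncard_singleton _
    have hcard : J.ncard = I'.ncard + 2 := by
      have hd : Disjoint (Sum.inl '' I') ({Sum.inr 1, Sum.inr 2} : Set (V ⊕ Fin 3)) := by
        rw [Set.disjoint_left]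
        rintro z ⟨y, _, rfl⟩ (h | h) <;> exact absurd h (by simp)
      rw [hJ, Set.ncard_union_eq hd (Set.toFinite _) (Set.toFinite _),
        Set.ncard_image_of_injective _ Sum.inl_injective, Set.ncard_pair ne12]
    calc alphaK T' 2 Set.univ + 2 = I'.ncard + 2 := by rw [hcI']
      _ = J.ncard := hcard.symm
      _ ≤ alphaK T 2 Set.univ := le_alphaK T 2 Set.univ hind
  have hale : alphaK T 2 Set.univ ≤ alphaK T' 2 Set.univ + 2 := by
    -- right part of I has at most 2 elements
    have hr2 : (Sum.inr ⁻¹' I).ncard ≤ 2 := by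
      by_contra h
      push_neg at h
      have hle3 : (Sum.inr ⁻¹' I).ncard ≤ 3 := by
        calc (Sum.inr ⁻¹' I).ncard ≤ (Set.univ : Set (Fin 3)).ncard :=
            Set.ncard_le_ncard (Set.subset_univ _) Set.finite_univ
          _ = 3 := by rw [Set.ncard_univ]; simp
      have heq : Sum.inr ⁻¹' I = (Set.univ : Set (Fin 3)) := by
        apply Set.eq_of_subset_of_ncard_le (Set.subset_univ _) _ Set.finite_univ
        rw [Set.ncard_univ]
        simp
        omega
      have h0 : (Sum.inr 0 : V ⊕ Fin 3) ∈ I := by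
        have : (0 : Fin 3) ∈ Sum.inr ⁻¹' I := by rw [heq]; trivial
        exact this
      have h1 : (Sum.inr 1 : V ⊕ Fin 3) ∈ I := by
        have : (1 : Fin 3) ∈ Sum.inr ⁻¹' I := by rw [heq]; trivial
        exact this
      have h2 : (Sum.inr 2 : V ⊕ Fin 3) ∈ I := by
        have : (2 : Fin 3) ∈ Sum.inr ⁻¹' I := by rw [heq]; trivial
        exact this
      have hind1 := hI.2 (Sum.inr 1) h1
      have hsub : ({Sum.inr 0, Sum.inr 2} : Set (V ⊕ Fin 3)) ⊆ T.neighborSet (Sum.inr 1) ∩ I := by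
        rintro z (rfl | rfl)
        · exact ⟨by rw [nbr1]; exact Or.inl rfl, h0⟩
        · exact ⟨by rw [nbr1]; exact Or.inr rfl, h2⟩
      have : 2 ≤ (T.neighborSet (Sum.inr 1) ∩ I).ncard := by
        calc 2 = ({Sum.inr 0, Sum.inr 2} : Set (V ⊕ Fin 3)).ncard := (Set.ncard_pair ne02).symm
          _ ≤ _ := Set.ncard_le_ncard hsub (Set.toFinite _)
      omega
    have hind' : IsKIndOn T' 2 Set.univ (Sum.inl ⁻¹' I) := by
      refine ⟨Set.subset_univ _, ?_⟩
      intro w hw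
      calc (T'.neighborSet w ∩ Sum.inl ⁻¹' I).ncard
          ≤ (T.neighborSet (Sum.inl w) ∩ I).ncard := card_le w I
        _ ≤ 2 - 1 := hI.2 (Sum.inl w) hw
    calc alphaK T 2 Set.univ = I.ncard := hcI.symm
      _ = (Sum.inl ⁻¹' I).ncard + (Sum.inr ⁻¹' I).ncard := split_ncard I
      _ ≤ alphaK T' 2 Set.univ + 2 := by
          have := le_alphaK T' 2 Set.univ hind'
          omega
  have halpha : alphaK T 2 Set.univ = alphaK T' 2 Set.univ + 2 := le_antisymm hale hage
  refine ⟨hgamma, halpha, ?_⟩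
  rw [hgamma, halpha]
  push_cast
  ring
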